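/- The one-point compactification of any KC topological space is k₂-Hausdorff; that is, if X is a topological space in which every compact subset is closed, and X⁺ = X ∪ {∞} is its one-point compactification, then the diagonal of X⁺ is k₂-closed in X⁺ × X⁺. -/

import Mathlib

open Set Filter Topology

universe u

/-- A subset `C` of a space `X` is k₁-closed provided for every compact subset `K` of `X`,
the intersection `C ∩ K` is closed in the subspace topology on `K`. -/
def IsK1Closed {X : Type u} [TopologicalSpace X] (C : Set X) : Prop :=
  ∀ K : Set X, IsCompact K → IsClosed ((Subtype.val : K → X) ⁻¹' C)

/-- A space is k₁-Hausdorff provided its diagonal is k₁-closed in its square. -/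
def K1Hausdorff (X : Type u) [TopologicalSpace X] : Prop :=
  IsK1Closed {p : X × X | p.1 = p.2}

/-- A space is KC provided every compact subset is closed. -/
def KCSpace (X : Type u) [TopologicalSpace X] : Prop :=
  ∀ K : Set X, IsCompact K → IsClosed K

/-- A space `X` is weakly Hausdorff provided for every compact Hausdorff space `K` and
continuous `f : K → X`, the image of `f` is closed in `X`. -/
def WeaklyHausdorff (X : Type u) [TopologicalSpace X] : Prop :=
  ∀ (K : Type u) [TopologicalSpace K] [CompactSpace K] [T2Space K]
    (f : K → X), Continuous f → IsClosed (Set.range f)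

/-- A subset `C` of `X` is k₂-closed provided for every compact Hausdorff space `K` and
continuous `f : K → X`, the preimage `f ⁻¹' C` is closed in `K`. -/
def IsK2Closed {X : Type u} [TopologicalSpace X] (C : Set X) : Prop :=
  ∀ (K : Type u) [TopologicalSpace K] [CompactSpace K] [T2Space K]
    (f : K → X), Continuous f → IsClosed (f ⁻¹' C)

/-- A space is k₂-Hausdorff provided its diagonal is k₂-closed in its square. -/
def K2Hausdorff (X : Type u) [TopologicalSpace X] : Prop :=
  IsK2Closed {p : X × X | p.1 = p.2}

/-- A space has unique sequential limits provided every convergent sequence has a unique limit. -/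
def UniqueSequentialLimits (X : Type u) [TopologicalSpace X] : Prop :=
  ∀ (a : ℕ → X) (l₀ l₁ : X),
    Filter.Tendsto a Filter.atTop (nhds l₀) →
    Filter.Tendsto a Filter.atTop (nhds l₁) → l₀ = l₁

lemma aux_kc_t1 {X : Type u} [TopologicalSpace X] (h : KCSpace X) : T1Space X :=
  ⟨fun _ => h _ isCompact_singleton⟩

lemma aux_t2_range {K X : Type u} [TopologicalSpace K] [TopologicalSpace X] [CompactSpace K]
    [T2Space K] (hX : KCSpace X) {f : K → X} (hf : Continuous f) :
    T2Space (Set.range f) := by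
  haveI := aux_kc_t1 hX
  constructor
  rintro ⟨a, ha⟩ ⟨b, hb⟩ hab
  have hab' : a ≠ b := fun e => hab (Subtype.ext e)
  have hA : IsClosed (f ⁻¹' {a}) := (isClosed_singleton).preimage hf
  have hB : IsClosed (f ⁻¹' {b}) := (isClosed_singleton).preimage hf
  have hdisj : Disjoint (f ⁻¹' {a}) (f ⁻¹' {b}) := by
    rw [Set.disjoint_left]
    rintro k hk1 hk2
    exact hab' ((Set.mem_preimage.mp hk1).symm.trans hk2)
  obtain ⟨U, V, hU, hV, hAU, hBV, hUV⟩ :=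
    SeparatedNhds.of_isCompact_isCompact (hA.isCompact) (hB.isCompact) hdisj
  have hSU : IsClosed (f '' Uᶜ) := hX _ ((hU.isClosed_compl.isCompact).image hf)
  have hSV : IsClosed (f '' Vᶜ) := hX _ ((hV.isClosed_compl.isCompact).image hf)
  refine ⟨Subtype.val ⁻¹' (f '' Uᶜ)ᶜ, Subtype.val ⁻¹' (f '' Vᶜ)ᶜ,
    hSU.isOpen_compl.preimage continuous_subtype_val,
    hSV.isOpen_compl.preimage continuous_subtype_val, ?_, ?_, ?_⟩
  · simp only [Set.mem_preimage, Set.mem_compl_iff]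
    rintro ⟨k, hk, hfk⟩
    exact hk (hAU (by simp [hfk]))
  · simp only [Set.mem_preimage, Set.mem_compl_iff]
    rintro ⟨k, hk, hfk⟩
    exact hk (hBV (by simp [hfk]))
  · rw [Set.disjoint_left]
    rintro ⟨z, k, rfl⟩ h1 h2
    rcases (show k ∈ U from by_contra fun hk => h1 ⟨k, hk, rfl⟩) with hkU
    rcases (show k ∈ V from by_contra fun hk => h2 ⟨k, hk, rfl⟩) with hkV
    exact (Set.disjoint_left.mp hUV hkU) hkV

lemma aux_kc_k2 {X : Type u} [TopologicalSpace X] (hX : KCSpace X) {K : Type u}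
    [TopologicalSpace K] [CompactSpace K] [T2Space K] {g₁ g₂ : K → X}
    (h₁ : Continuous g₁) (h₂ : Continuous g₂) : IsClosed {k | g₁ k = g₂ k} := by
  set f : K ⊕ K → X := Sum.elim g₁ g₂ with hfdef
  have hf : Continuous f := h₁.sumElim h₂
  haveI := aux_t2_range hX hf
  have m₁ : ∀ k, g₁ k ∈ Set.range f := fun k => ⟨Sum.inl k, rfl⟩
  have m₂ : ∀ k, g₂ k ∈ Set.range f := fun k => ⟨Sum.inr k, rfl⟩
  have hEq : {k | g₁ k = g₂ k} =
      {k | (⟨g₁ k, m₁ k⟩ : Set.range f) = ⟨g₂ k, m₂ k⟩} := by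
    ext k; simp [Subtype.ext_iff]
  rw [hEq]
  exact isClosed_eq (h₁.subtype_mk m₁) (h₂.subtype_mk m₂)

lemma aux_helper_infty {X : Type u} [TopologicalSpace X] (hX : KCSpace X) {K : Type u}
    [TopologicalSpace K] [CompactSpace K] [T2Space K] {g₁ g₂ : K → OnePoint X}
    (h₁ : Continuous g₁) (h₂ : Continuous g₂) {k₀ : K}
    (hk₀ : k₀ ∈ closure {k | g₁ k = g₂ k}) {x : X} (hq : g₂ k₀ = (x : OnePoint X)) :
    g₁ k₀ ≠ OnePoint.infty := by
  intro hp
  have hmemA : g₂ ⁻¹' (Set.range ((↑) : X → OnePoint X)) ∈ 𝓝 k₀ :=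
    h₂.continuousAt.preimage_mem_nhds
      (OnePoint.isOpen_range_coe.mem_nhds (by rw [hq]; exact ⟨x, rfl⟩))
  obtain ⟨N, hNn, hNsub, hNc⟩ := local_compact_nhds hmemA
  set L : Set X := ((↑) : X → OnePoint X) ⁻¹' (g₂ '' N) with hLdef
  have himg : ((↑) : X → OnePoint X) '' L = g₂ '' N :=
    Set.image_preimage_eq_of_subset (by rintro y ⟨k, hk, rfl⟩; exact hNsub hk)
  have hLc : IsCompact L := by
    rw [OnePoint.isOpenEmbedding_coe.toIsEmbedding.isCompact_iff, himg]
    exact hNc.image h₂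
  have hLcl : IsClosed L := hX _ hLc
  have hop : IsOpen (((↑) : X → OnePoint X) '' L)ᶜ :=
    OnePoint.isOpen_compl_image_coe.2 ⟨hLcl, hLc⟩
  have hW : (interior N ∩ g₁ ⁻¹' ((((↑) : X → OnePoint X) '' L)ᶜ)) ∈ 𝓝 k₀ := by
    refine Filter.inter_mem (interior_mem_nhds.2 hNn) ?_
    refine h₁.continuousAt.preimage_mem_nhds (hop.mem_nhds ?_)
    rw [hp]
    exact OnePoint.infty_notMem_image_coe
  obtain ⟨k, hkW, hkE⟩ := mem_closure_iff_nhds.mp hk₀ _ hW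
  have hmem : g₂ k ∈ ((↑) : X → OnePoint X) '' L := by
    rw [himg]; exact ⟨k, interior_subset hkW.1, rfl⟩
  exact hkW.2 (hkE ▸ hmem)

/-- The one-point compactification of any KC space is k₂-Hausdorff. -/
theorem onePoint_of_kc_is_k2Hausdorff (X : Type u) [TopologicalSpace X] (h : KCSpace X) :
    K2Hausdorff (OnePoint X) := by
  intro K _ _ _ f hf
  have h₁ : Continuous fun k => (f k).1 := continuous_fst.comp hf
  have h₂ : Continuous fun k => (f k).2 := continuous_snd.comp hf
  have hE : f ⁻¹' {p : OnePoint X × OnePoint X | p.1 = p.2} = {k | (f k).1 = (f k).2} := rfl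
  rw [hE]
  apply isClosed_of_closure_subset
  intro k₀ hk₀
  have hk₀' : k₀ ∈ closure {k | (f k).2 = (f k).1} := by
    have : {k | (f k).2 = (f k).1} = {k | (f k).1 = (f k).2} := by
      ext k; exact eq_comm
    rw [this]; exact hk₀
  show (f k₀).1 = (f k₀).2
  cases hp : (f k₀).1 with
  | infty =>
    cases hq : (f k₀).2 with
    | infty => rfl
    | coe x => exact absurd hp (aux_helper_infty h h₁ h₂ hk₀ hq)
  | coe x₁ =>
    cases hq : (f k₀).2 with
    | infty => exact absurd hq (aux_helper_infty h h₂ h₁ hk₀' hp)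
    | coe x₂ =>
      -- both finite case
      have hm₁ : (fun k => (f k).1) ⁻¹' (Set.range ((↑) : X → OnePoint X)) ∈ 𝓝 k₀ :=
        h₁.continuousAt.preimage_mem_nhds
          (OnePoint.isOpen_range_coe.mem_nhds (by rw [hp]; exact ⟨x₁, rfl⟩))
      have hm₂ : (fun k => (f k).2) ⁻¹' (Set.range ((↑) : X → OnePoint X)) ∈ 𝓝 k₀ :=
        h₂.continuousAt.preimage_mem_nhds
          (OnePoint.isOpen_range_coe.mem_nhds (by rw [hq]; exact ⟨x₂, rfl⟩))
      obtain ⟨N₁, hN₁n, hN₁sub, hN₁c⟩ := local_compact_nhds hm₁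
      obtain ⟨N₂, hN₂n, hN₂sub, hN₂c⟩ := local_compact_nhds hm₂
      set N : Set K := N₁ ∩ N₂ with hNdef
      have hNc : IsCompact N := hN₁c.inter_right hN₂c.isClosed
      have hNn : N ∈ 𝓝 k₀ := Filter.inter_mem hN₁n hN₂n
      have hNcl : IsClosed N := hN₁c.isClosed.inter hN₂c.isClosed
      haveI : CompactSpace ↥N := isCompact_iff_compactSpace.mp hNc
      have hex₁ : ∀ n : ↥N, ∃ y : X, ((y : OnePoint X)) = (f n.1).1 :=
        fun n => hN₁sub n.2.1
      have hex₂ : ∀ n : ↥N, ∃ y : X, ((y : OnePoint X)) = (f n.1).2 :=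
        fun n => hN₂sub n.2.2
      set u₁ : ↥N → X := fun n => (hex₁ n).choose with hu₁def
      set u₂ : ↥N → X := fun n => (hex₂ n).choose with hu₂def
      have hu₁ : ∀ n, ((u₁ n : OnePoint X)) = (f n.1).1 := fun n => (hex₁ n).choose_spec
      have hu₂ : ∀ n, ((u₂ n : OnePoint X)) = (f n.1).2 := fun n => (hex₂ n).choose_spec
      have hc₁ : Continuous u₁ := by
        rw [OnePoint.isOpenEmbedding_coe.toIsEmbedding.continuous_iff]
        have : ((↑) : X → OnePoint X) ∘ u₁ = fun n : ↥N => (f n.1).1 := funext hu₁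
        rw [this]
        exact h₁.comp continuous_subtype_val
      have hc₂ : Continuous u₂ := by
        rw [OnePoint.isOpenEmbedding_coe.toIsEmbedding.continuous_iff]
        have : ((↑) : X → OnePoint X) ∘ u₂ = fun n : ↥N => (f n.1).2 := funext hu₂
        rw [this]
        exact h₂.comp continuous_subtype_val
      have hclosed : IsClosed {n : ↥N | u₁ n = u₂ n} := aux_kc_k2 h hc₁ hc₂
      have hsetEq : {n : ↥N | u₁ n = u₂ n} = {n : ↥N | (f n.1).1 = (f n.1).2} := by
        ext n
        simp only [Set.mem_setOf_eq]
        constructor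
        · intro e
          rw [← hu₁ n, ← hu₂ n, e]
        · intro e
          apply OnePoint.coe_injective
          rw [hu₁, hu₂]
          exact e
      have hS : IsClosed (Subtype.val '' {n : ↥N | (f n.1).1 = (f n.1).2}) :=
        hNcl.isClosedEmbedding_subtypeVal.isClosedMap _ (hsetEq ▸ hclosed)
      have hsub : k₀ ∈ closure ({k | (f k).1 = (f k).2} ∩ N) := by
        rw [mem_closure_iff_nhds] at hk₀ ⊢
        intro t ht
        obtain ⟨k, hk1, hk2⟩ := hk₀ (t ∩ N) (Filter.inter_mem ht hNn)
        exact ⟨k, hk1.1, hk2, hk1.2⟩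
      have hsub2 : ({k | (f k).1 = (f k).2} ∩ N) ⊆
          Subtype.val '' {n : ↥N | (f n.1).1 = (f n.1).2} :=
        fun k hk => ⟨⟨k, hk.2⟩, hk.1, rfl⟩
      have hk₀mem := hS.closure_subset ((closure_mono hsub2) hsub)
      obtain ⟨n, hn, hnv⟩ := hk₀mem
      rw [← hp, ← hq, ← hnv]
      exact hn
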